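/- Let x₁ : ℝ → ℝ be continuously differentiable with x₁(λ₀) = −√6 and x₁′(λ₀) ≠ 0, and consider the family g₂(x, λ) = x − x(x − x₁(λ)). For λ with x₁(λ)² > 4, let x₀²(λ) = (x₁(λ) + 2 + √(x₁(λ)² − 4))/2 be the period-2 point of g₂(·, λ). Then the period-doubling bifurcation conditions hold for the second iterate g₂² at (x₀²(λ₀), λ₀): (i) the multiplier of the 2-cycle satisfies (g₂²)′(x₀²(λ₀), λ₀) = 5 − x₁(λ₀)² = −1; and (ii) the function λ ↦ (g₂⁴)′(x₀²(λ), λ) equals (5 − x₁(λ)²)² and has derivative −4√6 · x₁′(λ₀) ≠ 0 at λ = λ₀. -/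

import Mathlib

noncomputable def Gm (a : ℝ) : ℝ → ℝ := fun y => y - y * (y - a)

lemma Gm_hasDerivAt (a x : ℝ) : HasDerivAt (Gm a) (1 + a - 2 * x) x := by
  have h := (hasDerivAt_id x).sub ((hasDerivAt_id x).mul ((hasDerivAt_id x).sub_const a))
  simp only [id_eq] at h
  refine h.congr_deriv ?_
  ring

lemma key_facts (a : ℝ) (ha : 4 < a ^ 2) :
    deriv (Gm a ∘ Gm a) ((a + 2 + Real.sqrt (a ^ 2 - 4)) / 2) = 5 - a ^ 2 ∧
    deriv (Gm a ∘ (Gm a ∘ (Gm a ∘ Gm a))) ((a + 2 + Real.sqrt (a ^ 2 - 4)) / 2)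
      = (5 - a ^ 2) ^ 2 := by
  set s := Real.sqrt (a ^ 2 - 4) with hs0
  have hs : s ^ 2 = a ^ 2 - 4 := Real.sq_sqrt (by linarith)
  set p := (a + 2 + s) / 2 with hp0
  set q := (a + 2 - s) / 2 with hq0
  have hGp : Gm a p = q := by
    show p - p * (p - a) = q
    rw [hp0, hq0]; linear_combination (-(1:ℝ)/4) * hs
  have hGq : Gm a q = p := by
    show q - q * (q - a) = p
    rw [hp0, hq0]; linear_combination (-(1:ℝ)/4) * hs
  have c1 : HasDerivAt (Gm a) (1 + a - 2 * p) p := Gm_hasDerivAt a p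
  have c2 : HasDerivAt (Gm a) (1 + a - 2 * q) (Gm a p) := by
    rw [hGp]; exact Gm_hasDerivAt a q
  have d2 := c2.comp p c1
  have c3 : HasDerivAt (Gm a) (1 + a - 2 * p) ((Gm a ∘ Gm a) p) := by
    have h : (Gm a ∘ Gm a) p = p := by simp [Function.comp, hGp, hGq]
    rw [h]; exact Gm_hasDerivAt a p
  have d3 := c3.comp p d2
  have c4 : HasDerivAt (Gm a) (1 + a - 2 * q) ((Gm a ∘ (Gm a ∘ Gm a)) p) := by
    have h : (Gm a ∘ (Gm a ∘ Gm a)) p = q := by simp [Function.comp, hGp, hGq]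
    rw [h]; exact Gm_hasDerivAt a q
  have d4 := c4.comp p d3
  have hp2 : 1 + a - 2 * p = -1 - s := by rw [hp0]; ring
  have hq2 : 1 + a - 2 * q = -1 + s := by rw [hq0]; ring
  constructor
  · rw [d2.deriv, hp2, hq2]; linear_combination -hs
  · rw [d4.deriv, hp2, hq2]; linear_combination (s ^ 2 + a ^ 2 - 6) * hs

theorem stmt_7 (x₁ : ℝ → ℝ) (hx₁ : ContDiff ℝ 1 x₁) (lam₀ : ℝ)
    (h0 : x₁ lam₀ = -Real.sqrt 6) (h1 : deriv x₁ lam₀ ≠ 0) :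
    let g : ℝ → ℝ → ℝ := fun x lam => x - x * (x - x₁ lam)
    let xp : ℝ → ℝ := fun lam => (x₁ lam + 2 + Real.sqrt ((x₁ lam) ^ 2 - 4)) / 2
    let F : ℝ → ℝ := fun lam =>
      deriv (fun x => g (g (g (g x lam) lam) lam) lam) (xp lam)
    (deriv (fun x => g (g x lam₀) lam₀) (xp lam₀) = 5 - (x₁ lam₀) ^ 2 ∧
      5 - (x₁ lam₀) ^ 2 = -1) ∧
    (∀ lam : ℝ, (x₁ lam) ^ 2 > 4 → F lam = (5 - (x₁ lam) ^ 2) ^ 2) ∧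
    deriv F lam₀ = -4 * Real.sqrt 6 * deriv x₁ lam₀ ∧ deriv F lam₀ ≠ 0 := by
  intro g xp F
  have h66 : x₁ lam₀ ^ 2 = 6 := by
    rw [h0, neg_pow]; simp [Real.sq_sqrt (by norm_num : (6:ℝ) ≥ 0)]
  have h6 : 4 < x₁ lam₀ ^ 2 := by rw [h66]; norm_num
  have hF4 : ∀ lam : ℝ, (x₁ lam) ^ 2 > 4 → F lam = (5 - (x₁ lam) ^ 2) ^ 2 :=
    fun lam h => (key_facts (x₁ lam) h).2
  have hdF : deriv F lam₀ = -4 * Real.sqrt 6 * deriv x₁ lam₀ := by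
    have hc : ContinuousAt (fun lam => x₁ lam ^ 2) lam₀ :=
      (hx₁.continuous.continuousAt).pow 2
    have hev : ∀ᶠ lam in nhds lam₀, 4 < x₁ lam ^ 2 :=
      hc.eventually (eventually_gt_nhds h6)
    have hFeq : F =ᶠ[nhds lam₀] fun lam => (5 - x₁ lam ^ 2) ^ 2 :=
      hev.mono fun lam h => hF4 lam h
    have hx : HasDerivAt x₁ (deriv x₁ lam₀) lam₀ :=
      ((hx₁.differentiable one_ne_zero) lam₀).hasDerivAt
    have hD : HasDerivAt (fun x => (5 - x₁ x ^ 2) ^ 2) (((2:ℕ):ℝ) * (5 - x₁ lam₀ ^ 2) ^ (2 - 1) * (0 - ((2:ℕ):ℝ) * x₁ lam₀ ^ (2 - 1) * deriv x₁ lam₀)) lam₀ := ((hasDerivAt_const lam₀ (5:ℝ)).sub (hx.pow 2)).pow 2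
    rw [hFeq.deriv_eq, hD.deriv, h66, h0]
    have h6' : Real.sqrt 6 ^ 2 = 6 := Real.sq_sqrt (by norm_num)
    push_cast
    ring_nf
  refine ⟨⟨(key_facts (x₁ lam₀) h6).1, by rw [h66]; norm_num⟩, hF4, hdF, ?_⟩
  rw [hdF]
  have hs6 : Real.sqrt 6 ≠ 0 := by positivity
  exact mul_ne_zero (mul_ne_zero (by norm_num) hs6) h1
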